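/- Let (Y_j) be i.i.d. positive integer-valued random variables, S_m = Y_1 + ... + Y_m, M_n = sup{m : S_m ≤ n}, and suppose P(Y_1 ≥ n) ≥ n^{-(1-α)+o(1)} for some α ∈ (0,1). Then for every k ∈ ℕ, E(M_n^k) ≤ n^{k(1-α)+o(1)} as n → ∞. -/

import Mathlib

open MeasureTheory ProbabilityTheory

section Aux

lemma aux_pow_le_choose (m K : ℕ) : (m+1)^K ≤ K.factorial * Nat.choose (m+K) K := by
  induction K with
  | zero => simp
  | succ K ih =>
    have h3 : (m+K+1) * Nat.choose (m+K) K = Nat.choose (m+K+1) (K+1) * (K+1) :=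
      Nat.add_one_mul_choose_eq (m+K) K
    calc (m+1)^(K+1) = (m+1)^K * (m+1) := by ring
      _ ≤ K.factorial * Nat.choose (m+K) K * (m+K+1) :=
          Nat.mul_le_mul ih (by omega)
      _ = K.factorial * ((m+K+1) * Nat.choose (m+K) K) := by ring
      _ = K.factorial * (Nat.choose (m+K+1) (K+1) * (K+1)) := by rw [h3]
      _ = (K+1).factorial * Nat.choose (m+(K+1)) (K+1) := by
          rw [Nat.factorial_succ]
          ring_nf

lemma aux_diff_pow (x : ℝ) (hx : 0 ≤ x) (K : ℕ) :
    (x+1)^(K+1) - x^(K+1) ≤ (K+1) * (x+1)^K := by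
  induction K with
  | zero => norm_num
  | succ K ih =>
    have h1 : (0:ℝ) ≤ x + 1 := by linarith
    have h2 : x^(K+1) ≤ (x+1)^(K+1) := pow_le_pow_left₀ hx (by linarith) _
    have h3 : (x+1)^(K+1) ≤ (x+1)^(K+1) := le_refl _
    have key : (x+1)^(K+2) - x^(K+2) = (x+1) * ((x+1)^(K+1) - x^(K+1)) + x^(K+1) := by
      ring
    have h4 : (x+1) * ((x+1)^(K+1) - x^(K+1)) ≤ (x+1) * ((K+1) * (x+1)^K) :=
      mul_le_mul_of_nonneg_left ih h1
    have h5 : (x+1) * ((K+1) * (x+1)^K) = (K+1) * (x+1)^(K+1) := by ring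
    push_cast
    nlinarith [h2, h4]

lemma aux_choose_sum (q p : ℝ) (hq : 0 ≤ q) (hp : 0 ≤ p) (hqp : q + p = 1) (j : ℕ) :
    ∀ N : ℕ, p^(j+1) * ∑ m ∈ Finset.range N, (Nat.choose (m+j) j : ℝ) * q^m ≤ 1 := by
  induction j with
  | zero =>
    intro N
    have hgs : (∑ m ∈ Finset.range N, q ^ m) * (q - 1) = q ^ N - 1 := geom_sum_mul q N
    have hqN : 0 ≤ q ^ N := pow_nonneg hq N
    have hs : ∑ m ∈ Finset.range N, (Nat.choose (m+0) 0 : ℝ) * q^m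
        = ∑ m ∈ Finset.range N, q^m := by simp
    rw [hs, pow_one]
    have hp' : p = 1 - q := by linarith
    have : p * ∑ m ∈ Finset.range N, q ^ m = 1 - q ^ N := by
      rw [hp']
      have h2 : (1 - q) * ∑ m ∈ Finset.range N, q ^ m
          = -((∑ m ∈ Finset.range N, q ^ m) * (q - 1)) := by ring
      rw [h2, hgs]
      ring
    rw [this]
    linarith
  | succ j ih =>
    intro N
    set F := ∑ m ∈ Finset.range N, (Nat.choose (m+(j+1)) (j+1) : ℝ) * q^m with hF
    set G := ∑ m ∈ Finset.range N, (Nat.choose (m+j) j : ℝ) * q^m with hG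
    set H := ∑ m ∈ Finset.range N, (Nat.choose (m+j) (j+1) : ℝ) * q^m with hH
    have hsplit : F = G + H := by
      rw [hF, hG, hH, ← Finset.sum_add_distrib]
      refine Finset.sum_congr rfl fun m _ => ?_
      have : (m + (j+1)).choose (j+1) = (m+j).choose j + (m+j).choose (j+1) :=
        Nat.choose_succ_succ (m+j) j
      rw [this]
      push_cast
      ring
    have hFnonneg : ∀ N' : ℕ, 0 ≤ ∑ m ∈ Finset.range N', (Nat.choose (m+(j+1)) (j+1) : ℝ) * q^m :=
      fun N' => Finset.sum_nonneg fun m _ => mul_nonneg (by positivity) (pow_nonneg hq m)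
    have hshift : H ≤ q * F := by
      rw [hH, hF]
      cases N with
      | zero => simp
      | succ N' =>
        rw [Finset.sum_range_succ']
        have h0 : (Nat.choose (0+j) (j+1) : ℝ) * q^0 = 0 := by
          rw [Nat.choose_eq_zero_of_lt (by omega)]
          simp
        rw [h0, add_zero]
        have heq : ∑ m ∈ Finset.range N', (Nat.choose ((m+1)+j) (j+1) : ℝ) * q^(m+1)
            = q * ∑ m ∈ Finset.range N', (Nat.choose (m+(j+1)) (j+1) : ℝ) * q^m := by
          rw [Finset.mul_sum]
          refine Finset.sum_congr rfl fun m _ => ?_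
          have : (m+1)+j = m+(j+1) := by omega
          rw [this]
          ring
        rw [heq]
        refine mul_le_mul_of_nonneg_left ?_ hq
        refine Finset.sum_le_sum_of_subset_of_nonneg
          (Finset.range_subset_range.2 (Nat.le_succ N')) fun m _ _ =>
          mul_nonneg (by positivity) (pow_nonneg hq m)
    have hpqF : q * F + p * F = F := by
      have : (q + p) * F = F := by rw [hqp, one_mul]
      linarith [this, (add_mul q p F)]
    have key : p * F ≤ G := by
      have h1 : (q+p) * F = F := by rw [hqp, one_mul]
      rw [add_mul] at h1
      linarith [hsplit, hshift]
    calc p^(j+1+1) * F = p^(j+1) * (p * F) := by ring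
      _ ≤ p^(j+1) * G := mul_le_mul_of_nonneg_left key (pow_nonneg hp _)
      _ ≤ 1 := ih N

lemma aux_moment_sum (q p : ℝ) (hq : 0 ≤ q) (hq1 : q ≤ 1) (hp : 0 ≤ p) (hqp : q + p = 1)
    (k N : ℕ) :
    p^k * ∑ m ∈ Finset.range N, (((m:ℝ)+1)^k - (m:ℝ)^k) * q^(m+1) ≤ k.factorial := by
  cases k with
  | zero => simp
  | succ K =>
    have hterm : ∀ m ∈ Finset.range N, (((m:ℝ)+1)^(K+1) - (m:ℝ)^(K+1)) * q^(m+1)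
        ≤ ((K+1).factorial : ℝ) * ((Nat.choose (m+K) K : ℝ) * q^m) := by
      intro m _
      have hm : (0:ℝ) ≤ m := Nat.cast_nonneg m
      have h1 : ((m:ℝ)+1)^(K+1) - (m:ℝ)^(K+1) ≤ (K+1) * ((m:ℝ)+1)^K :=
        aux_diff_pow (m:ℝ) hm K
      have h2 : ((m:ℝ)+1)^K ≤ (K.factorial : ℝ) * (Nat.choose (m+K) K : ℝ) := by
        have := aux_pow_le_choose m K
        have hcast : (((m+1)^K : ℕ) : ℝ) ≤ ((K.factorial * Nat.choose (m+K) K : ℕ) : ℝ) :=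
          Nat.cast_le.2 this
        push_cast at hcast
        convert hcast using 2
      have h3 : q^(m+1) ≤ q^m := pow_le_pow_of_le_one hq hq1 (Nat.le_succ m)
      have h4 : (0:ℝ) ≤ q^(m+1) := pow_nonneg hq _
      calc (((m:ℝ)+1)^(K+1) - (m:ℝ)^(K+1)) * q^(m+1)
          ≤ ((K+1) * ((m:ℝ)+1)^K) * q^(m+1) := mul_le_mul_of_nonneg_right h1 h4
        _ ≤ ((K+1) * ((K.factorial : ℝ) * (Nat.choose (m+K) K : ℝ))) * q^m := by
            refine mul_le_mul ?_ h3 h4 (by positivity)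
            exact mul_le_mul_of_nonneg_left h2 (by positivity)
        _ = ((K+1).factorial : ℝ) * ((Nat.choose (m+K) K : ℝ) * q^m) := by
            rw [Nat.factorial_succ]
            push_cast
            ring
    have hsum : ∑ m ∈ Finset.range N, (((m:ℝ)+1)^(K+1) - (m:ℝ)^(K+1)) * q^(m+1)
        ≤ ((K+1).factorial : ℝ) * ∑ m ∈ Finset.range N, (Nat.choose (m+K) K : ℝ) * q^m := by
      rw [Finset.mul_sum]
      exact Finset.sum_le_sum hterm
    calc p^(K+1) * ∑ m ∈ Finset.range N, (((m:ℝ)+1)^(K+1) - (m:ℝ)^(K+1)) * q^(m+1)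
        ≤ p^(K+1) * (((K+1).factorial : ℝ) * ∑ m ∈ Finset.range N, (Nat.choose (m+K) K : ℝ) * q^m) :=
          mul_le_mul_of_nonneg_left hsum (pow_nonneg hp _)
      _ = ((K+1).factorial : ℝ) * (p^(K+1) * ∑ m ∈ Finset.range N, (Nat.choose (m+K) K : ℝ) * q^m) := by ring
      _ ≤ ((K+1).factorial : ℝ) * 1 :=
          mul_le_mul_of_nonneg_left (aux_choose_sum q p hq hp hqp K N) (by positivity)
      _ = ((K+1).factorial : ℝ) := mul_one _
end Aux

/-- **Renewal moment bound.** For i.i.d. positive-integer random variables `Y_j`,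
partial sums `S_m`, and `M_n = sup{m : S_m ≤ n}`, if
`P(Y_1 ≥ n) ≥ n^{-(1-α)+o(1)}` for some `α ∈ (0,1)`, then for every `k ∈ ℕ`,
`E(M_n^k) ≤ n^{k(1-α)+o(1)}` as `n → ∞`. -/
theorem renewal_moment_bound
    {Ω : Type*} [MeasureSpace Ω] [IsProbabilityMeasure (ℙ : Measure Ω)]
    (Y : ℕ → Ω → ℕ)
    (hmeas : ∀ j, Measurable (Y j))
    (hpos : ∀ j ω, 0 < Y j ω)
    (hindep : iIndepFun Y ℙ)
    (hident : ∀ j, IdentDistrib (Y j) (Y 0) ℙ ℙ)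
    (S : ℕ → Ω → ℕ) (hS : ∀ m ω, S m ω = ∑ j ∈ Finset.range m, Y j ω)
    (M : ℕ → Ω → ℕ) (hM : ∀ n ω, M n ω = sSup {m | S m ω ≤ n})
    (α : ℝ) (hα : 0 < α ∧ α < 1)
    (htail : ∀ ε : ℝ, 0 < ε → ∃ N : ℕ, ∀ n : ℕ, N ≤ n →
      (n : ℝ) ^ (-(1 - α) - ε) ≤ (ℙ {ω | n ≤ Y 0 ω}).toReal) :
    ∀ k : ℕ, ∀ ε : ℝ, 0 < ε → ∃ N : ℕ, ∀ n : ℕ, N ≤ n →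
      ∫ ω, ((M n ω : ℝ)) ^ k ∂ℙ ≤ (n : ℝ) ^ ((k : ℝ) * (1 - α) + ε) := by
  obtain ⟨hα0, hα1⟩ := hα
  intro k ε hε
  set ε' : ℝ := ε / (2*((k:ℝ)+1)) with hε'def
  have hε' : 0 < ε' := by positivity
  obtain ⟨N₀, hN₀⟩ := htail ε' hε'
  set e : ℝ := (1 - α) + ε' with hedef
  have he0 : 0 < e := by rw [hedef]; linarith
  set C : ℝ := ((k.factorial : ℝ) + 1) * (2:ℝ) ^ (e * (k:ℝ)) with hCdef
  have hC0 : 0 < C := by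
    rw [hCdef]
    have h1 : (0:ℝ) < (k.factorial : ℝ) + 1 := by positivity
    have h2 : (0:ℝ) < (2:ℝ) ^ (e * (k:ℝ)) := Real.rpow_pos_of_pos (by norm_num) _
    positivity
  refine ⟨max N₀ (⌈C ^ (2/ε)⌉₊ + 2), fun n hn => ?_⟩
  have hnN₀ : N₀ ≤ n := le_trans (le_max_left _ _) hn
  have hn2 : 2 ≤ n := by
    have := le_trans (le_max_right _ _) hn
    omega
  have hn1R : (1:ℝ) ≤ (n:ℝ) := by exact_mod_cast Nat.one_le_of_lt hn2
  have hn0R : (0:ℝ) < (n:ℝ) := by linarith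
  have hnC : C ^ (2/ε) ≤ (n:ℝ) := by
    have hceil : ⌈C ^ (2/ε)⌉₊ ≤ n := by
      have := le_trans (le_max_right _ _) hn
      omega
    exact le_trans (Nat.le_ceil _) (by exact_mod_cast hceil)
  -- basic facts about S and M
  have hSmeas : ∀ m, Measurable (S m) := by
    intro m
    have h : S m = fun ω => ∑ j ∈ Finset.range m, Y j ω := funext fun ω => hS m ω
    rw [h]
    exact Finset.measurable_sum _ fun j _ => hmeas j
  have hSmono : ∀ ω, Monotone fun m => S m ω := by
    intro ω m₁ m₂ h
    simp only [hS]
    exact Finset.sum_le_sum_of_subset (Finset.range_subset_range.2 h)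
  have hSge : ∀ m ω, m ≤ S m ω := by
    intro m ω
    rw [hS]
    calc m = ∑ _j ∈ Finset.range m, 1 := by simp
      _ ≤ ∑ j ∈ Finset.range m, Y j ω := Finset.sum_le_sum fun j _ => hpos j ω
  have hbdd : ∀ ω, BddAbove {m | S m ω ≤ n} := fun ω =>
    ⟨n, fun m hm => le_trans (hSge m ω) hm⟩
  have hne : ∀ ω, ({m | S m ω ≤ n} : Set ℕ).Nonempty := fun ω =>
    ⟨0, by simp [Set.mem_setOf_eq, hS]⟩
  have hMiff : ∀ m ω, m ≤ M n ω ↔ S m ω ≤ n := by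
    intro m ω
    constructor
    · intro h
      have hmem : sSup {m | S m ω ≤ n} ∈ {m | S m ω ≤ n} := Nat.sSup_mem (hne ω) (hbdd ω)
      rw [← hM n ω] at hmem
      simp only [Set.mem_setOf_eq] at hmem
      exact le_trans (hSmono ω h) hmem
    · intro h
      rw [hM]
      exact le_csSup (hbdd ω) h
  have hMn : ∀ ω, M n ω ≤ n := fun ω =>
    le_trans (hSge _ ω) ((hMiff (M n ω) ω).mp le_rfl)
  -- probability bounds
  set qe : ENNReal := ℙ ((Y 0) ⁻¹' (Set.Iic n)) with hqedef
  set qr : ℝ := qe.toReal with hqrdef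
  set pr : ℝ := (ℙ {ω | n+1 ≤ Y 0 ω}).toReal with hprdef
  have hAmeas : ∀ m : ℕ, MeasurableSet {ω | S m ω ≤ n} := fun m =>
    (hSmeas m) measurableSet_Iic
  have hqe1 : qe ≤ 1 := prob_le_one
  have hprob : ∀ m : ℕ, (ℙ {ω | S m ω ≤ n}).toReal ≤ qr ^ m := by
    intro m
    have hsub : {ω | S m ω ≤ n} ⊆ ⋂ j ∈ Finset.range m, (Y j) ⁻¹' (Set.Iic n) := by
      intro ω hω
      simp only [Set.mem_setOf_eq] at hω
      rw [hS] at hω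
      simp only [Set.mem_iInter, Set.mem_preimage, Set.mem_Iic]
      intro j hj
      exact le_trans (Finset.single_le_sum (fun i _ => Nat.zero_le (Y i ω)) hj) hω
    have hind : ℙ (⋂ j ∈ Finset.range m, (Y j) ⁻¹' (Set.Iic n)) = qe ^ m := by
      rw [hindep.meas_biInter fun j _ => ⟨Set.Iic n, measurableSet_Iic, rfl⟩]
      rw [Finset.prod_congr rfl
        (fun j _ => (hident j).measure_mem_eq measurableSet_Iic :
          ∀ j ∈ Finset.range m, ℙ ((Y j) ⁻¹' (Set.Iic n)) = qe),
        Finset.prod_const, Finset.card_range]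
    have h1 : ℙ {ω | S m ω ≤ n} ≤ qe ^ m := hind ▸ measure_mono hsub
    calc (ℙ {ω | S m ω ≤ n}).toReal ≤ (qe ^ m).toReal :=
          ENNReal.toReal_mono (ENNReal.pow_ne_top (measure_ne_top ℙ _)) h1
      _ = qr ^ m := by rw [ENNReal.toReal_pow]
  have hq0 : 0 ≤ qr := ENNReal.toReal_nonneg
  have hq1 : qr ≤ 1 := by
    calc qr ≤ (1 : ENNReal).toReal := ENNReal.toReal_mono ENNReal.one_ne_top hqe1
      _ = 1 := by simp
  have hp0 : 0 ≤ pr := ENNReal.toReal_nonneg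
  have hqp : qr + pr = 1 := by
    have hcompl : {ω | n+1 ≤ Y 0 ω} = ((Y 0) ⁻¹' (Set.Iic n))ᶜ := by
      ext ω
      simp only [Set.mem_setOf_eq, Set.mem_compl_iff, Set.mem_preimage, Set.mem_Iic, not_le]
      omega
    have h2 : ℙ (((Y 0) ⁻¹' (Set.Iic n))ᶜ) = 1 - qe :=
      prob_compl_eq_one_sub ((hmeas 0) measurableSet_Iic)
    rw [hprdef, hcompl, h2, ENNReal.toReal_sub_of_le hqe1 ENNReal.one_ne_top,
      ENNReal.toReal_one, ← hqrdef]
    ring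
  have htb : ((n+1:ℕ):ℝ) ^ (-(1 - α) - ε') ≤ pr := hN₀ (n+1) (by omega)
  have hprpos : 0 < pr :=
    lt_of_lt_of_le (Real.rpow_pos_of_pos (by positivity) _) htb
  have hpr1 : pr ≤ 1 := by linarith
  -- the pointwise identity
  set c : ℕ → ℝ := fun m => ((m:ℝ)+1)^k - (m:ℝ)^k with hcdef
  have hcnn : ∀ m, 0 ≤ c m := fun m =>
    sub_nonneg.2 (pow_le_pow_left₀ (Nat.cast_nonneg m) (by linarith) k)
  have hptwise : ∀ ω, ((M n ω : ℝ))^k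
      = (0:ℝ)^k + ∑ m ∈ Finset.range n,
          c m * Set.indicator {ω' | S (m+1) ω' ≤ n} (fun _ => (1:ℝ)) ω := by
    intro ω
    have hstep : ∀ m : ℕ, Set.indicator {ω' | S (m+1) ω' ≤ n} (fun _ => (1:ℝ)) ω
        = if m+1 ≤ M n ω then 1 else 0 := by
      intro m
      by_cases h : m+1 ≤ M n ω
      · rw [if_pos h, Set.indicator_of_mem]
        exact (hMiff (m+1) ω).mp h
      · rw [if_neg h, Set.indicator_of_notMem]
        intro hmem
        exact h ((hMiff (m+1) ω).mpr hmem)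
    have hsum : ∑ m ∈ Finset.range n,
        c m * Set.indicator {ω' | S (m+1) ω' ≤ n} (fun _ => (1:ℝ)) ω
        = ∑ m ∈ Finset.range (M n ω), c m := by
      have hvan : ∀ m ∈ Finset.range n, m ∉ Finset.range (M n ω) →
          c m * Set.indicator {ω' | S (m+1) ω' ≤ n} (fun _ => (1:ℝ)) ω = 0 := by
        intro m _ hnm
        rw [hstep m, if_neg, mul_zero]
        intro h
        exact hnm (Finset.mem_range.2 h)
      rw [← Finset.sum_subset (Finset.range_subset_range.2 (hMn ω)) hvan]
      refine Finset.sum_congr rfl fun m hm => ?_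
      rw [hstep m, if_pos (show m+1 ≤ M n ω from Finset.mem_range.1 hm), mul_one]
    rw [hsum]
    have htel : ∑ m ∈ Finset.range (M n ω), c m
        = ((M n ω : ℝ))^k - ((0:ℕ):ℝ)^k := by
      rw [← Finset.sum_range_sub (fun i : ℕ => ((i:ℝ))^k) (M n ω)]
      refine Finset.sum_congr rfl fun m _ => ?_
      simp only [hcdef]
      push_cast
      ring
    rw [htel]
    push_cast
    ring
  -- the integral computation
  have hint : ∀ m : ℕ, Integrable
      (fun ω => c m * Set.indicator {ω' | S (m+1) ω' ≤ n} (fun _ => (1:ℝ)) ω) ℙ :=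
    fun m => ((integrable_const (1:ℝ)).indicator (hAmeas (m+1))).const_mul (c m)
  have hintegral : ∫ ω, ((M n ω : ℝ))^k ∂ℙ
      = (0:ℝ)^k + ∑ m ∈ Finset.range n, c m * (ℙ {ω | S (m+1) ω ≤ n}).toReal := by
    calc ∫ ω, ((M n ω : ℝ))^k ∂ℙ
        = ∫ ω, ((0:ℝ)^k + ∑ m ∈ Finset.range n,
            c m * Set.indicator {ω' | S (m+1) ω' ≤ n} (fun _ => (1:ℝ)) ω) ∂ℙ :=
          integral_congr_ae (Filter.Eventually.of_forall hptwise)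
      _ = (0:ℝ)^k + ∑ m ∈ Finset.range n, c m * (ℙ {ω | S (m+1) ω ≤ n}).toReal := by
          rw [integral_add (integrable_const _)
            (integrable_finset_sum _ fun m _ => hint m), integral_const,
            integral_finset_sum _ fun m _ => hint m]
          simp only [measure_univ, probReal_univ, ENNReal.toReal_one, one_smul]
          congr 1
          refine Finset.sum_congr rfl fun m _ => ?_
          rw [integral_const_mul, integral_indicator_const (1:ℝ) (hAmeas (m+1))]
          simp [mul_comm, Measure.real]
  -- bounding the integral
  have hEbound : ∫ ω, ((M n ω : ℝ))^k ∂ℙ ≤ 1 + (k.factorial : ℝ) * (pr⁻¹)^k := by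
    rw [hintegral]
    have h1 : (0:ℝ)^k ≤ 1 := by
      rcases Nat.eq_zero_or_pos k with hk | hk
      · simp [hk]
      · rw [zero_pow (Nat.pos_iff_ne_zero.mp hk)]; norm_num
    have h2 : ∑ m ∈ Finset.range n, c m * (ℙ {ω | S (m+1) ω ≤ n}).toReal
        ≤ ∑ m ∈ Finset.range n, c m * qr^(m+1) :=
      Finset.sum_le_sum fun m _ =>
        mul_le_mul_of_nonneg_left (hprob (m+1)) (hcnn m)
    have h3 : ∑ m ∈ Finset.range n, c m * qr^(m+1) ≤ (k.factorial : ℝ) * (pr⁻¹)^k := by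
      have hkey := aux_moment_sum qr pr hq0 hq1 hp0 hqp k n
      have hppow : 0 < pr^k := pow_pos hprpos k
      have heq : (k.factorial : ℝ) * (pr⁻¹)^k = (k.factorial : ℝ) / pr^k := by
        rw [inv_pow, div_eq_mul_inv]
      rw [heq, le_div_iff₀ hppow]
      calc (∑ m ∈ Finset.range n, c m * qr^(m+1)) * pr^k
          = pr^k * ∑ m ∈ Finset.range n, (((m:ℝ)+1)^k - (m:ℝ)^k) * qr^(m+1) := by
            rw [mul_comm]
        _ ≤ (k.factorial : ℝ) := hkey
    linarith
  -- final numeric assembly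
  have hinv1 : 1 ≤ pr⁻¹ := (one_le_inv₀ hprpos).2 hpr1
  have hinvnn : (0:ℝ) ≤ pr⁻¹ := by linarith
  have hE2 : 1 + (k.factorial : ℝ) * (pr⁻¹)^k ≤ ((k.factorial : ℝ) + 1) * (pr⁻¹)^k := by
    have h1k : 1 ≤ (pr⁻¹)^k := one_le_pow₀ hinv1
    nlinarith [h1k]
  have hinvle : pr⁻¹ ≤ ((n+1:ℕ):ℝ) ^ e := by
    have hx : (0:ℝ) < ((n+1:ℕ):ℝ) ^ (-(1 - α) - ε') :=
      Real.rpow_pos_of_pos (by positivity) _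
    calc pr⁻¹ ≤ (((n+1:ℕ):ℝ) ^ (-(1 - α) - ε'))⁻¹ := inv_anti₀ hx htb
      _ = ((n+1:ℕ):ℝ) ^ e := by
          rw [show -(1 - α) - ε' = -e by rw [hedef]; ring, Real.rpow_neg (by positivity),
            inv_inv]
  have hpowle : (pr⁻¹)^k ≤ ((n+1:ℕ):ℝ) ^ (e * (k:ℝ)) := by
    calc (pr⁻¹)^k ≤ (((n+1:ℕ):ℝ) ^ e)^k := pow_le_pow_left₀ hinvnn hinvle k
      _ = ((n+1:ℕ):ℝ) ^ (e * (k:ℝ)) := by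
          rw [← Real.rpow_natCast (((n+1:ℕ):ℝ) ^ e) k, ← Real.rpow_mul (by positivity)]
  have hbase : ((n+1:ℕ):ℝ) ^ (e * (k:ℝ)) ≤ (2:ℝ)^(e * (k:ℝ)) * (n:ℝ)^(e * (k:ℝ)) := by
    have h1 : ((n+1:ℕ):ℝ) ≤ 2 * (n:ℝ) := by push_cast; linarith
    calc ((n+1:ℕ):ℝ) ^ (e * (k:ℝ)) ≤ (2*(n:ℝ))^(e * (k:ℝ)) :=
          Real.rpow_le_rpow (by positivity) h1 (by positivity)
      _ = (2:ℝ)^(e * (k:ℝ)) * (n:ℝ)^(e * (k:ℝ)) :=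
          Real.mul_rpow (by norm_num) (by positivity)
  have hfinal1 : ∫ ω, ((M n ω : ℝ))^k ∂ℙ ≤ C * (n:ℝ)^(e * (k:ℝ)) := by
    have hfk : (0:ℝ) ≤ (k.factorial : ℝ) + 1 := by positivity
    calc ∫ ω, ((M n ω : ℝ))^k ∂ℙ ≤ 1 + (k.factorial : ℝ) * (pr⁻¹)^k := hEbound
      _ ≤ ((k.factorial : ℝ) + 1) * (pr⁻¹)^k := hE2
      _ ≤ ((k.factorial : ℝ) + 1) * (((n+1:ℕ):ℝ) ^ (e * (k:ℝ))) :=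
          mul_le_mul_of_nonneg_left hpowle hfk
      _ ≤ ((k.factorial : ℝ) + 1) * ((2:ℝ)^(e * (k:ℝ)) * (n:ℝ)^(e * (k:ℝ))) :=
          mul_le_mul_of_nonneg_left hbase hfk
      _ = C * (n:ℝ)^(e * (k:ℝ)) := by rw [hCdef]; ring
  have hCle : C ≤ (n:ℝ)^(ε/2) := by
    have h1 : C = (C^(2/ε))^(ε/2) := by
      rw [← Real.rpow_mul (le_of_lt hC0), show (2/ε)*(ε/2) = 1 by field_simp,
        Real.rpow_one]
    rw [h1]
    exact Real.rpow_le_rpow (Real.rpow_nonneg (le_of_lt hC0) _) hnC (by positivity)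
  have hexp : (n:ℝ)^(ε/2) ≤ (n:ℝ)^(ε - (k:ℝ)*ε') := by
    apply Real.rpow_le_rpow_of_exponent_le hn1R
    have hkε : (k:ℝ)*ε' ≤ ε/2 := by
      rw [hε'def, mul_div_assoc']
      rw [div_le_div_iff₀ (by positivity) (by norm_num)]
      nlinarith [hε.le, Nat.cast_nonneg (α := ℝ) k]
    linarith
  calc ∫ ω, ((M n ω : ℝ))^k ∂ℙ ≤ C * (n:ℝ)^(e * (k:ℝ)) := hfinal1
    _ ≤ (n:ℝ)^(ε - (k:ℝ)*ε') * (n:ℝ)^(e * (k:ℝ)) :=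
        mul_le_mul_of_nonneg_right (hCle.trans hexp) (Real.rpow_nonneg (by positivity) _)
    _ = (n:ℝ)^((ε - (k:ℝ)*ε') + e * (k:ℝ)) := (Real.rpow_add hn0R _ _).symm
    _ = (n:ℝ)^((k:ℝ)*(1-α) + ε) := by
        rw [show (ε - (k:ℝ)*ε') + e * (k:ℝ) = (k:ℝ)*(1-α) + ε by rw [hedef]; ring]
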